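/- Let H be a k-bounded hypergraph on vertex set V, C ⊆ V, and G a family of subsets of V, each of size between 2 and k, such that every edge of H contained in C contains some member of G. Suppose Δ_{s,p}(H) ≤ (w_p(H)/|V|)·p^{s−1} for all 2 ≤ s ≤ k, and w_p(G) ≤ 2δpn where |V| = 2n. Then w_p(H[C]) ≤ δ·w_p(H). -/

import Mathlib

lemma sum_biUnion_le_aux {ι α : Type*} [DecidableEq α] {f : α → ℝ} (hf : ∀ x, 0 ≤ f x)
    (s : Finset ι) (t : ι → Finset α) :
    ∑ x ∈ s.biUnion t, f x ≤ ∑ i ∈ s, ∑ x ∈ t i, f x := by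
  classical
  induction s using Finset.induction_on with
  | empty => simp
  | insert _ _ hi ih =>
    rename_i i s
    rw [Finset.biUnion_insert, Finset.sum_insert hi]
    have h1 : ∑ x ∈ t i ∪ s.biUnion t, f x
        = ∑ x ∈ t i, f x + ∑ x ∈ (s.biUnion t) \ t i, f x := by
      rw [← Finset.sum_union Finset.disjoint_sdiff, Finset.union_sdiff_self_eq_union]
    have h2 : ∑ x ∈ (s.biUnion t) \ t i, f x ≤ ∑ x ∈ s.biUnion t, f x :=
      Finset.sum_le_sum_of_subset_of_nonneg (Finset.sdiff_subset) (fun x _ _ => hf x)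
    calc ∑ x ∈ t i ∪ s.biUnion t, f x
        ≤ ∑ x ∈ t i, f x + ∑ x ∈ s.biUnion t, f x := by rw [h1]; linarith
      _ ≤ ∑ x ∈ t i, f x + ∑ j ∈ s, ∑ x ∈ t j, f x := by linarith

/-- Almost-independence bound: if every edge of H inside C contains a member of G,
Δ_{s,p}(H) ≤ (w_p(H)/|V|)·p^{s-1} for 2 ≤ s ≤ k, and w_p(G) ≤ 2δpn (|V| = 2n),
then w_p(H[C]) ≤ δ·w_p(H). -/
theorem stmt_11 {V : Type*} [Fintype V] [DecidableEq V] (k n : ℕ)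
    (H G : Finset (Finset V)) (C : Finset V) (p δ : ℝ)
    (hp0 : 0 < p) (hp1 : p ≤ 1) (hδ : 0 < δ)
    (hV : Fintype.card V = 2 * n)
    (hbdd : ∀ E ∈ H, E.card ≤ k)
    (hG : ∀ E ∈ G, 2 ≤ E.card ∧ E.card ≤ k)
    (hcover : ∀ F ∈ H, F ⊆ C → ∃ E ∈ G, E ⊆ F)
    (hΔ : ∀ s : ℕ, 2 ≤ s → s ≤ k → ∀ L : Finset V, L.card = s →
      ∑ F ∈ H.filter (fun F => L ⊆ F), p ^ F.card
        ≤ ((∑ F ∈ H, p ^ F.card) / (Fintype.card V : ℝ)) * p ^ (s - 1))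
    (hGw : ∑ E ∈ G, p ^ E.card ≤ 2 * δ * p * n) :
    ∑ F ∈ H.filter (fun F => F ⊆ C), p ^ F.card ≤ δ * ∑ F ∈ H, p ^ F.card := by
  classical
  set w : ℝ := ∑ F ∈ H, p ^ F.card with hw
  have hw0 : 0 ≤ w := Finset.sum_nonneg fun F _ => (pow_pos hp0 _).le
  have hpow : ∀ F : Finset V, (0:ℝ) ≤ p ^ F.card := fun F => (pow_pos hp0 _).le
  -- the filtered set is contained in the biUnion
  have hsub : H.filter (fun F => F ⊆ C) ⊆ G.biUnion (fun E => H.filter (fun F => E ⊆ F)) := by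
    intro F hF
    simp only [Finset.mem_filter] at hF
    obtain ⟨E, hE, hEF⟩ := hcover F hF.1 hF.2
    exact Finset.mem_biUnion.2 ⟨E, hE, Finset.mem_filter.2 ⟨hF.1, hEF⟩⟩
  have step1 : ∑ F ∈ H.filter (fun F => F ⊆ C), p ^ F.card
      ≤ ∑ E ∈ G, ∑ F ∈ H.filter (fun F => E ⊆ F), p ^ F.card :=
    le_trans (Finset.sum_le_sum_of_subset_of_nonneg hsub (fun F _ _ => hpow F))
      (sum_biUnion_le_aux hpow G _)
  have step2 : ∑ E ∈ G, ∑ F ∈ H.filter (fun F => E ⊆ F), p ^ F.card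
      ≤ ∑ E ∈ G, (w / (Fintype.card V : ℝ)) * p ^ (E.card - 1) := by
    apply Finset.sum_le_sum
    intro E hE
    exact hΔ E.card (hG E hE).1 (hG E hE).2 E rfl
  -- key: ∑ p^(card-1) ≤ 2δn
  have key : ∑ E ∈ G, p ^ (E.card - 1) ≤ 2 * δ * n := by
    have hmul : p * ∑ E ∈ G, p ^ (E.card - 1) = ∑ E ∈ G, p ^ E.card := by
      rw [Finset.mul_sum]
      apply Finset.sum_congr rfl
      intro E hE
      rw [← pow_succ']
      congr 1
      have := (hG E hE).1
      omega
    have : p * ∑ E ∈ G, p ^ (E.card - 1) ≤ p * (2 * δ * n) := by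
      rw [hmul]; calc ∑ E ∈ G, p ^ E.card ≤ 2 * δ * p * n := hGw
        _ = p * (2 * δ * n) := by ring
    exact le_of_mul_le_mul_left this hp0
  rcases Nat.eq_zero_or_pos n with hn | hn
  · -- n = 0 : V is empty, filtered set is empty
    have hcard : Fintype.card V = 0 := by rw [hV, hn]
    have hVempty : IsEmpty V := Fintype.card_eq_zero_iff.mp hcard
    have hfe : H.filter (fun F => F ⊆ C) = ∅ := by
      rw [Finset.filter_eq_empty_iff]
      intro F hF hFC
      obtain ⟨E, hE, hEF⟩ := hcover F hF hFC
      have hEe : E = ∅ := Finset.eq_empty_of_isEmpty E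
      have h2 := (hG E hE).1
      rw [hEe, Finset.card_empty] at h2
      omega
    rw [hfe]
    simp only [Finset.sum_empty]
    exact mul_nonneg hδ.le hw0
  · have hn0 : (0:ℝ) < n := by exact_mod_cast hn
    have step3 : ∑ E ∈ G, (w / (Fintype.card V : ℝ)) * p ^ (E.card - 1) ≤ δ * w := by
      rw [← Finset.mul_sum, hV]
      push_cast
      have hfac : (0:ℝ) ≤ w / (2 * n) := div_nonneg hw0 (by positivity)
      calc w / (2 * (n:ℝ)) * ∑ E ∈ G, p ^ (E.card - 1)
          ≤ w / (2 * n) * (2 * δ * n) := mul_le_mul_of_nonneg_left key hfac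
        _ = δ * w := by field_simp
    linarith
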